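/- Let Ŵ be a minimizer of G(W) = ‖X̂ − W Bᵀ‖_F² + λ·Tr(Wᵀ D W), where D is the diagonal matrix with D_{ii} = 1/(2‖W⁰_{i·}‖₂) built from the previous iterate W⁰ (with all rows nonzero). Then ‖X̂ − Ŵ Bᵀ‖_F² + λ‖Ŵ‖_{2,1} ≤ ‖X̂ − W⁰ Bᵀ‖_F² + λ‖W⁰‖_{2,1}, where ‖W‖_{2,1} = Σ_i ‖W_{i·}‖₂. -/

import Mathlib

open Matrix

/-- Euclidean norm of a finite real vector. -/
noncomputable def vecEnorm {m : Type*} [Fintype m] (v : m → ℝ) : ℝ :=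
  Real.sqrt (∑ i, v i ^ 2)

/-- Squared Frobenius norm of a real matrix. -/
def frobSq {d n : ℕ} (A : Matrix (Fin d) (Fin n) ℝ) : ℝ := ∑ i, ∑ j, A i j ^ 2

lemma vecEnorm_nonneg {m : Type*} [Fintype m] (v : m → ℝ) : 0 ≤ vecEnorm v :=
  Real.sqrt_nonneg _

lemma vecEnorm_sq {m : Type*} [Fintype m] (v : m → ℝ) :
    vecEnorm v ^ 2 = ∑ i, v i ^ 2 := by
  rw [vecEnorm, Real.sq_sqrt]
  exact Finset.sum_nonneg fun i _ => sq_nonneg _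

lemma vecEnorm_pos {m : Type*} [Fintype m] (v : m → ℝ) (hv : v ≠ 0) : 0 < vecEnorm v := by
  rcases (vecEnorm_nonneg v).lt_or_eq with h | h
  · exact h
  · exfalso
    apply hv
    funext i
    have h2 : (∑ i, v i ^ 2) = 0 := by
      have := vecEnorm_sq v
      rw [← h] at this
      simpa using this.symm
    have := (Finset.sum_eq_zero_iff_of_nonneg (fun i _ => sq_nonneg (v i))).mp h2 i
      (Finset.mem_univ i)
    exact pow_eq_zero_iff (n := 2) (by norm_num) |>.mp this

lemma tr_diag {d c : ℕ} (f : Fin d → ℝ) (W : Matrix (Fin d) (Fin c) ℝ) :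
    Matrix.trace (Wᵀ * Matrix.diagonal f * W) = ∑ i, f i * ∑ k, W i k ^ 2 := by
  simp only [Matrix.trace, Matrix.diag_apply, Matrix.mul_apply, Matrix.transpose_apply,
    Matrix.diagonal_apply, Finset.sum_mul, Finset.mul_sum]
  rw [Finset.sum_comm]
  refine Finset.sum_congr rfl fun i _ => ?_
  refine Finset.sum_congr rfl fun k _ => ?_
  rw [Finset.sum_eq_single i]
  · simp; ring
  · intro b _ hb; simp [hb]
  · simp

theorem stmt_13 (d n c : ℕ) (Xhat : Matrix (Fin d) (Fin n) ℝ)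
    (B : Matrix (Fin n) (Fin c) ℝ) (lam : ℝ) (hlam : 0 < lam)
    (W0 What : Matrix (Fin d) (Fin c) ℝ)
    (hrows : ∀ i, W0 i ≠ 0)
    (D : Matrix (Fin d) (Fin d) ℝ)
    (hD : D = Matrix.diagonal (fun i => 1 / (2 * vecEnorm (W0 i))))
    (hmin : ∀ W : Matrix (Fin d) (Fin c) ℝ,
      frobSq (Xhat - What * Bᵀ) + lam * Matrix.trace (Whatᵀ * D * What) ≤
        frobSq (Xhat - W * Bᵀ) + lam * Matrix.trace (Wᵀ * D * W)) :
    frobSq (Xhat - What * Bᵀ) + lam * ∑ i, vecEnorm (What i) ≤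
      frobSq (Xhat - W0 * Bᵀ) + lam * ∑ i, vecEnorm (W0 i) := by
  set s : Fin d → ℝ := fun i => vecEnorm (W0 i) with hs
  have hspos : ∀ i, 0 < s i := fun i => vecEnorm_pos _ (hrows i)
  have htr : ∀ W : Matrix (Fin d) (Fin c) ℝ,
      Matrix.trace (Wᵀ * D * W) = ∑ i, (1 / (2 * s i)) * ∑ k, W i k ^ 2 := by
    intro W; rw [hD, tr_diag]
  -- row-wise inequality for What
  have hrow : ∀ i, vecEnorm (What i) ≤ (1 / (2 * s i)) * (∑ k, What i k ^ 2) + s i / 2 := by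
    intro i
    have hsq : (∑ k, What i k ^ 2) = vecEnorm (What i) ^ 2 := (vecEnorm_sq _).symm
    rw [hsq]
    set a := vecEnorm (What i) with ha
    have hsi := hspos i
    have heq : (1 / (2 * s i)) * a ^ 2 + s i / 2 - a = (a - s i) ^ 2 / (2 * s i) := by
      field_simp; ring
    have hnn : 0 ≤ (a - s i) ^ 2 / (2 * s i) :=
      div_nonneg (sq_nonneg _) (by positivity)
    linarith [heq ▸ hnn]
  -- row-wise equality for W0
  have hrow0 : ∀ i, vecEnorm (W0 i) = (1 / (2 * s i)) * (∑ k, W0 i k ^ 2) + s i / 2 := by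
    intro i
    have hsq : (∑ k, W0 i k ^ 2) = s i ^ 2 := (vecEnorm_sq _).symm
    have hsi := (hspos i).ne'
    rw [hsq]; field_simp; ring
  have h1 : frobSq (Xhat - What * Bᵀ) + lam * ∑ i, vecEnorm (What i) ≤
      frobSq (Xhat - What * Bᵀ) + lam * Matrix.trace (Whatᵀ * D * What) +
        lam * ∑ i, s i / 2 := by
    rw [htr]
    have : (∑ i, vecEnorm (What i)) ≤ (∑ i, (1 / (2 * s i)) * ∑ k, What i k ^ 2) +
        ∑ i, s i / 2 := by
      rw [← Finset.sum_add_distrib]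
      exact Finset.sum_le_sum fun i _ => hrow i
    nlinarith [this]
  have h2 : frobSq (Xhat - W0 * Bᵀ) + lam * Matrix.trace (W0ᵀ * D * W0) +
      lam * ∑ i, s i / 2 = frobSq (Xhat - W0 * Bᵀ) + lam * ∑ i, vecEnorm (W0 i) := by
    rw [htr]
    have : (∑ i, vecEnorm (W0 i)) = (∑ i, (1 / (2 * s i)) * ∑ k, W0 i k ^ 2) +
        ∑ i, s i / 2 := by
      rw [← Finset.sum_add_distrib]
      exact Finset.sum_congr rfl fun i _ => hrow0 i
    rw [this]; ring
  calc frobSq (Xhat - What * Bᵀ) + lam * ∑ i, vecEnorm (What i)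
      ≤ frobSq (Xhat - What * Bᵀ) + lam * Matrix.trace (Whatᵀ * D * What) +
        lam * ∑ i, s i / 2 := h1
    _ ≤ frobSq (Xhat - W0 * Bᵀ) + lam * Matrix.trace (W0ᵀ * D * W0) +
        lam * ∑ i, s i / 2 := by linarith [hmin W0]
    _ = _ := h2
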